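/- arXiv:1610.03300 — 4 statements merged into one kernel-verified Lean document; each statement's English description precedes it below -/
import Mathlib

section
/- For every x ∈ ℝ^{n+1} and t ≥ 0, the first coordinate of the flow satisfies |φ^{(0)}_t(x)| ≤ e ‖x‖_∞ e^{-αt} (1 ∨ t^n), and consequently sup_{t ≥ 0} |φ^{(0)}_t(x)| ≤ e ‖x‖_∞ (1 ∨ (n/(αe))^n). -/
/-- First coordinate of the flow of the Markovian cascade:
`φ^{(0)}_t(x) = e^{-αt} Σ_{m=0}^{n} (t^m/m!) x^{(m)}`. -/
noncomputable def cascadeFlowZero (α : ℝ) (n : ℕ) (x : ℕ → ℝ) (t : ℝ) : ℝ :=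
  Real.exp (-α * t) * ∑ m ∈ Finset.range (n + 1), t ^ m / (Nat.factorial m) * x m

/-- `s^n e^{-s} ≤ (n/e)^n` for `s ≥ 0`. -/
lemma pow_mul_exp_neg_le (n : ℕ) (s : ℝ) (hs : 0 ≤ s) :
    s ^ n * Real.exp (-s) ≤ ((n : ℝ) / Real.exp 1) ^ n := by
  rcases Nat.eq_zero_or_pos n with hn | hn
  · subst hn; simpa using Real.exp_le_one_iff.2 (neg_nonpos.mpr hs)
  · have hn' : (0 : ℝ) < n := by exact_mod_cast hn
    have h1 : s / n ≤ Real.exp (s / n - 1) := by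
      have := Real.add_one_le_exp (s / n - 1)
      linarith
    have h2 : s ≤ n * Real.exp (s / n - 1) := by
      calc s = n * (s / n) := by field_simp
        _ ≤ n * Real.exp (s / n - 1) := by
            exact mul_le_mul_of_nonneg_left h1 (le_of_lt hn')
    have h3 : s ^ n ≤ (n : ℝ) ^ n * Real.exp (s - n) := by
      calc s ^ n ≤ (n * Real.exp (s / n - 1)) ^ n :=
            pow_le_pow_left₀ hs h2 n
        _ = (n : ℝ) ^ n * Real.exp (s / n - 1) ^ n := mul_pow _ _ _
        _ = (n : ℝ) ^ n * Real.exp (s - n) := by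
            rw [← Real.exp_nat_mul]
            congr 1
            field_simp
    calc s ^ n * Real.exp (-s) ≤ (n : ℝ) ^ n * Real.exp (s - n) * Real.exp (-s) := by
          exact mul_le_mul_of_nonneg_right h3 (Real.exp_pos _).le
      _ = (n : ℝ) ^ n * Real.exp (-(n : ℝ)) := by
          rw [mul_assoc, ← Real.exp_add]; ring_nf
      _ = ((n : ℝ) / Real.exp 1) ^ n := by
          rw [div_pow, ← Real.exp_nat_mul, mul_one, Real.exp_neg, div_eq_mul_inv]

lemma exp_max_le (α : ℝ) (hα : 0 < α) (n : ℕ) (t : ℝ) (ht : 0 ≤ t) :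
    Real.exp (-α * t) * max 1 (t ^ n) ≤ max 1 (((n : ℝ) / (α * Real.exp 1)) ^ n) := by
  rcases le_total (t ^ n) 1 with h | h
  · rw [max_eq_left h]
    refine le_max_of_le_left ?_
    rw [mul_one]
    exact Real.exp_le_one_iff.2 (by nlinarith)
  · rw [max_eq_right h]
    refine le_max_of_le_right ?_
    have key := pow_mul_exp_neg_le n (α * t) (by positivity)
    have hrw : ((n : ℝ) / (α * Real.exp 1)) ^ n
        = ((n : ℝ) / Real.exp 1) ^ n / α ^ n := by
      rw [div_pow, div_pow, div_div, mul_pow]; ring_nf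
    rw [hrw, le_div_iff₀ (by positivity)]
    calc Real.exp (-α * t) * t ^ n * α ^ n
        = (α * t) ^ n * Real.exp (-(α * t)) := by rw [mul_pow]; ring_nf
      _ ≤ ((n : ℝ) / Real.exp 1) ^ n := key

/-- For every `x` and `t ≥ 0`, `|φ^{(0)}_t(x)| ≤ e ‖x‖_∞ e^{-αt} (1 ∨ t^n)`, and
consequently `|φ^{(0)}_t(x)| ≤ e ‖x‖_∞ (1 ∨ (n/(αe))^n)` for all `t ≥ 0`. -/
theorem cascadeFlowZero_bound (α : ℝ) (hα : 0 < α) (n : ℕ) (x : ℕ → ℝ) :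
    ∀ t ≥ (0 : ℝ),
      |cascadeFlowZero α n x t| ≤
        Real.exp 1 * ((Finset.range (n + 1)).sup' (by simp) fun m => |x m|) *
          (Real.exp (-α * t) * max 1 (t ^ n)) ∧
      |cascadeFlowZero α n x t| ≤
        Real.exp 1 * ((Finset.range (n + 1)).sup' (by simp) fun m => |x m|) *
          max 1 ((n / (α * Real.exp 1)) ^ n) := by
  intro t ht
  set M : ℝ := (Finset.range (n + 1)).sup' (by simp) fun m => |x m| with hM
  have hM0 : 0 ≤ M := le_trans (abs_nonneg (x 0))
    (Finset.le_sup' (fun m => |x m|) (Finset.mem_range.2 (Nat.succ_pos n)))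
  have hsum : |∑ m ∈ Finset.range (n + 1), t ^ m / (Nat.factorial m) * x m|
      ≤ Real.exp 1 * M * max 1 (t ^ n) := by
    calc |∑ m ∈ Finset.range (n + 1), t ^ m / (Nat.factorial m) * x m|
        ≤ ∑ m ∈ Finset.range (n + 1), |t ^ m / (Nat.factorial m) * x m| :=
          Finset.abs_sum_le_sum_abs _ _
      _ ≤ ∑ m ∈ Finset.range (n + 1), max 1 (t ^ n) / (Nat.factorial m) * M := by
          refine Finset.sum_le_sum fun m hm => ?_
          rw [abs_mul, abs_div, abs_pow, abs_of_nonneg ht,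
            abs_of_nonneg (by positivity : (0:ℝ) ≤ (Nat.factorial m : ℝ))]
          have hxm : |x m| ≤ M := Finset.le_sup' (fun m => |x m|) hm
          have htm : t ^ m ≤ max 1 (t ^ n) := by
            rcases le_total t 1 with h | h
            · exact le_max_of_le_left (pow_le_one₀ ht h)
            · exact le_max_of_le_right
                (pow_le_pow_right₀ h (Nat.lt_succ_iff.mp (Finset.mem_range.mp hm)))
          gcongr
      _ = (∑ m ∈ Finset.range (n + 1), (1:ℝ) ^ m / (Nat.factorial m)) * (max 1 (t ^ n) * M) := by
          rw [Finset.sum_mul]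
          refine Finset.sum_congr rfl fun m _ => ?_
          rw [one_pow]; ring
      _ ≤ Real.exp 1 * (max 1 (t ^ n) * M) := by
          refine mul_le_mul_of_nonneg_right
            (Real.sum_le_exp_of_nonneg zero_le_one _) (by positivity)
      _ = Real.exp 1 * M * max 1 (t ^ n) := by ring
  have h1 : |cascadeFlowZero α n x t| ≤
      Real.exp 1 * M * (Real.exp (-α * t) * max 1 (t ^ n)) := by
    rw [cascadeFlowZero, abs_mul, abs_of_nonneg (Real.exp_pos _).le]
    calc Real.exp (-α * t) * |∑ m ∈ Finset.range (n + 1), t ^ m / (Nat.factorial m) * x m|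
        ≤ Real.exp (-α * t) * (Real.exp 1 * M * max 1 (t ^ n)) :=
          mul_le_mul_of_nonneg_left hsum (Real.exp_pos _).le
      _ = Real.exp 1 * M * (Real.exp (-α * t) * max 1 (t ^ n)) := by ring
  refine ⟨h1, h1.trans ?_⟩
  exact mul_le_mul_of_nonneg_left (exp_max_le α hα n t ht) (by positivity)
end

section
/- If c_1, ..., c_{n+1} are all nonzero and 0 < s_{n+1} < s_n < ... < s_1 < T, then the Jacobian matrix of s ↦ γ(x, c, s) = φ_T(x) + Σ_k c_k e^{-α s_k} v(s_k) is invertible, with determinant equal to (-1)^{n+1} α (∏_k c_k e^{-α s_k}) times the determinant of the matrix with columns C̃^{(k)} = (α s_k^n/n! − s_k^{n-1}/(n-1)!, ..., α s_k − 1, 1)^T, which is a nonzero multiple of a Vandermonde determinant in s_1, ..., s_{n+1}. -/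
open Matrix

noncomputable def jacMat (α : ℝ) (n : ℕ) (c s : Fin (n + 1) → ℝ) :
    Matrix (Fin (n + 1)) (Fin (n + 1)) ℝ :=
  Matrix.of fun j k =>
    c k * Real.exp (-α * s k) *
      ((if (j : ℕ) < n then s k ^ (n - 1 - (j : ℕ)) / (Nat.factorial (n - 1 - (j : ℕ)))
        else 0)
        - α * (s k ^ (n - (j : ℕ)) / (Nat.factorial (n - (j : ℕ)))))

noncomputable def tildeCMat (α : ℝ) (n : ℕ) (s : Fin (n + 1) → ℝ) :
    Matrix (Fin (n + 1)) (Fin (n + 1)) ℝ :=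
  Matrix.of fun j k =>
    if (j : ℕ) < n then
      α * (s k ^ (n - (j : ℕ)) / (Nat.factorial (n - (j : ℕ))))
        - s k ^ (n - 1 - (j : ℕ)) / (Nat.factorial (n - 1 - (j : ℕ)))
    else 1

noncomputable def Vmat (n : ℕ) (s : Fin (n + 1) → ℝ) :
    Matrix (Fin (n + 1)) (Fin (n + 1)) ℝ :=
  Matrix.of fun j k => s k ^ (n - (j : ℕ)) / (Nat.factorial (n - (j : ℕ)))

noncomputable def Wmat (n : ℕ) (s : Fin (n + 1) → ℝ) :
    Matrix (Fin (n + 1)) (Fin (n + 1)) ℝ :=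
  Matrix.of fun j k => s k ^ (n - (j : ℕ))

noncomputable def Amat (α : ℝ) (n : ℕ) :
    Matrix (Fin (n + 1)) (Fin (n + 1)) ℝ :=
  Matrix.of fun j j' =>
    (if j' = j then (if (j : ℕ) < n then α else 1) else 0)
      - (if (j' : ℕ) = (j : ℕ) + 1 then 1 else 0)

lemma Wmat_det_ne_zero (n : ℕ) (s : Fin (n + 1) → ℝ) (hs : Function.Injective s) :
    (Wmat n s).det ≠ 0 := by
  have hW : Wmat n s = ((Matrix.vandermonde s).submatrix id Fin.revPerm)ᵀ := by
    ext j k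
    simp [Wmat, Matrix.vandermonde, Matrix.transpose_apply, Fin.val_rev]
  rw [hW, Matrix.det_transpose, Matrix.det_permute', Matrix.det_vandermonde]
  refine mul_ne_zero (by simp) ?_
  rw [Finset.prod_ne_zero_iff]
  intro i _
  rw [Finset.prod_ne_zero_iff]
  intro j hj
  have : i ≠ j := (Finset.mem_Ioi.mp hj).ne
  exact sub_ne_zero.mpr fun h => this (hs h).symm

lemma tildeC_factor (α : ℝ) (n : ℕ) (s : Fin (n + 1) → ℝ) :
    tildeCMat α n s = Amat α n * Vmat n s := by
  ext j k
  rw [Matrix.mul_apply]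
  simp only [Amat, Matrix.of_apply, sub_mul, Finset.sum_sub_distrib, ite_mul, zero_mul, one_mul,
    Finset.sum_ite_eq' Finset.univ j]
  by_cases hj : (j : ℕ) < n
  · have hlt : (j : ℕ) + 1 < n + 1 := by omega
    have h2 : (∑ j' : Fin (n + 1), if (j' : ℕ) = (j : ℕ) + 1 then Vmat n s j' k else 0)
        = Vmat n s ⟨(j : ℕ) + 1, hlt⟩ k := by
      rw [Finset.sum_eq_single (⟨(j : ℕ) + 1, hlt⟩ : Fin (n + 1))]
      · simp
      · intro b _ hb
        rw [if_neg]
        intro hbv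
        exact hb (Fin.ext hbv)
      · simp
    rw [h2]
    simp only [tildeCMat, Vmat, Matrix.of_apply, if_pos hj, Finset.mem_univ, if_true]
    have : n - ((j : ℕ) + 1) = n - 1 - (j : ℕ) := by omega
    rw [this]
  · have hj' : (j : ℕ) = n := by omega
    have h2 : (∑ j' : Fin (n + 1), if (j' : ℕ) = (j : ℕ) + 1 then Vmat n s j' k else 0) = 0 := by
      apply Finset.sum_eq_zero
      intro b _
      rw [if_neg]
      omega
    rw [h2]
    simp [tildeCMat, Vmat, hj', hj]

lemma tildeC_det_ne_zero (α : ℝ) (hα : 0 < α) (n : ℕ) (s : Fin (n + 1) → ℝ)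
    (hs : Function.Injective s) : (tildeCMat α n s).det ≠ 0 := by
  rw [tildeC_factor, Matrix.det_mul]
  have hA : (Amat α n).det = α ^ n := by
    rw [Matrix.det_of_upperTriangular]
    · rw [Fin.prod_univ_castSucc]
      have : ∀ j : Fin n, Amat α n j.castSucc j.castSucc = α := by
        intro j
        simp [Amat, j.isLt, Fin.ne_of_lt, (by omega : ¬ ((j : ℕ) = (j : ℕ) + 1))]
      simp only [this]
      simp [Amat]
    · intro i j hji
      have hlt : (j : ℕ) < (i : ℕ) := hji
      have h1 : ¬ j = i := by intro h; omega
      have h2 : ¬ ((j : ℕ) = (i : ℕ) + 1) := by omega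
      simp [Amat, h1, h2]
  have hV : (Vmat n s) = Matrix.diagonal (fun j : Fin (n + 1) =>
      ((Nat.factorial (n - (j : ℕ)) : ℝ))⁻¹) * Wmat n s := by
    ext j k
    simp [Vmat, Wmat, Matrix.diagonal_mul, div_eq_inv_mul]
  refine mul_ne_zero (by rw [hA]; positivity) ?_
  rw [hV, Matrix.det_mul, Matrix.det_diagonal]
  refine mul_ne_zero (Finset.prod_ne_zero_iff.mpr fun j _ => ?_) (Wmat_det_ne_zero n s hs)
  exact inv_ne_zero (Nat.cast_ne_zero.mpr (Nat.factorial_ne_zero _))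

/-- If all jump heights `c_k` are nonzero and `0 < s_n < ... < s_0 < T`, then the
Jacobian of `s ↦ γ(x,c,s)` is invertible: its determinant equals
`(-1)^{n+1} α (∏_k c_k e^{-α s_k}) det C̃`, and it is nonzero. -/
theorem jacMat_det_ne_zero (α : ℝ) (hα : 0 < α) (n : ℕ) (T : ℝ) (hT : 0 < T)
    (c s : Fin (n + 1) → ℝ) (hc : ∀ k, c k ≠ 0) (hanti : StrictAnti s)
    (hs0 : ∀ k, 0 < s k) (hsT : ∀ k, s k < T) :
    (jacMat α n c s).det =
      (-1) ^ (n + 1) * α * (∏ k, c k * Real.exp (-α * s k)) * (tildeCMat α n s).det ∧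
    (jacMat α n c s).det ≠ 0 := by
  have hfac : jacMat α n c s =
      Matrix.diagonal (fun j : Fin (n + 1) => if (j : ℕ) < n then (-1 : ℝ) else -α) *
        tildeCMat α n s *
        Matrix.diagonal (fun k => c k * Real.exp (-α * s k)) := by
    ext j k
    rw [Matrix.mul_diagonal, Matrix.diagonal_mul]
    by_cases hj : (j : ℕ) < n
    · simp only [jacMat, tildeCMat, Matrix.of_apply, if_pos hj]
      ring
    · have hj' : n - (j : ℕ) = 0 := by omega
      simp only [jacMat, tildeCMat, Matrix.of_apply, if_neg hj, hj', pow_zero,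
        Nat.factorial_zero, Nat.cast_one, div_one]
      ring
  have hdet : (jacMat α n c s).det =
      (-1) ^ (n + 1) * α * (∏ k, c k * Real.exp (-α * s k)) * (tildeCMat α n s).det := by
    rw [hfac, Matrix.det_mul, Matrix.det_mul, Matrix.det_diagonal, Matrix.det_diagonal]
    have hr : (∏ j : Fin (n + 1), if (j : ℕ) < n then (-1 : ℝ) else -α)
        = (-1) ^ (n + 1) * α := by
      rw [Fin.prod_univ_castSucc]
      have h1 : ∀ j : Fin n, (if ((j.castSucc : Fin (n+1)) : ℕ) < n then (-1 : ℝ) else -α)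
          = -1 := fun j => if_pos (by simp [j.isLt])
      simp only [h1, Finset.prod_const, Finset.card_univ, Fintype.card_fin]
      rw [if_neg (by simp)]
      rw [pow_succ]
      ring
    rw [hr]
    ring
  refine ⟨hdet, ?_⟩
  rw [hdet]
  refine mul_ne_zero (mul_ne_zero (mul_ne_zero (by positivity) hα.ne') ?_)
    (tildeC_det_ne_zero α hα n s hanti.injective)
  exact Finset.prod_ne_zero_iff.mpr fun k _ => mul_ne_zero (hc k) (Real.exp_ne_zero _)
end

section
/- Row reduction of the matrix J with columns C̃^{(k)} = (α s_k^n/n! − s_k^{n-1}/(n-1)!, α s_k^{n-1}/(n-1)! − s_k^{n-2}/(n-2)!, ..., α s_k − 1, 1)^T, by replacing row i bottom-up with α^{-1}(r_i + r_{i-1})·(n+1-i)!, transforms J into the Vandermonde matrix with entries s_k^{n+1-j} in row j (last row all ones); hence det J ≠ 0 iff s_1, ..., s_{n+1} are pairwise distinct. -/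
/-- The row-operation matrix. -/
noncomputable def auxM (α : ℝ) (n : ℕ) : Matrix (Fin (n + 1)) (Fin (n + 1)) ℝ :=
  Matrix.of fun j i =>
    if (j : ℕ) < n then
      (if i = j then α / (Nat.factorial (n - (j : ℕ)))
       else if (i : ℕ) = (j : ℕ) + 1 then -(1 / (Nat.factorial (n - 1 - (j : ℕ))))
       else 0)
    else if i = j then 1 else 0

lemma auxM_upper (α : ℝ) (n : ℕ) : (auxM α n).BlockTriangular id := by
  intro i j hji
  simp only [id_eq] at hji
  simp only [auxM, Matrix.of_apply]
  split_ifs with h h1 h2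
  · exact absurd h1 (by intro he; subst he; exact lt_irrefl _ hji)
  · exfalso; omega
  · rfl
  · exfalso
    have : (i : ℕ) = n := by omega
    have : (j : ℕ) < n := by
      have := hji
      omega
    exact h (by omega)
  · rfl

lemma auxM_diag_ne (α : ℝ) (hα : 0 < α) (n : ℕ) (j : Fin (n + 1)) :
    auxM α n j j ≠ 0 := by
  simp only [auxM, Matrix.of_apply, if_pos rfl]
  split_ifs
  · positivity
  · norm_num

lemma tildeC_factorization (α : ℝ) (n : ℕ) (s : Fin (n + 1) → ℝ) :
    tildeCMat α n s =
      auxM α n * (Matrix.of fun j k : Fin (n + 1) => s k ^ (n - (j : ℕ))) := by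
  ext j k
  rw [Matrix.mul_apply]
  simp only [Matrix.of_apply]
  by_cases hj : (j : ℕ) < n
  · set j' : Fin (n + 1) := ⟨(j : ℕ) + 1, by omega⟩ with hj'
    have hne : j ≠ j' := by
      intro h
      have := congrArg Fin.val h
      simp [hj'] at this
    have e1 : auxM α n j j = α / (Nat.factorial (n - (j : ℕ))) := by
      simp [auxM, hj]
    have e2 : auxM α n j j' = -(1 / (Nat.factorial (n - 1 - (j : ℕ)))) := by
      have h1 : j' ≠ j := hne.symm
      have h2 : ((j' : ℕ)) = (j : ℕ) + 1 := rfl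
      simp [auxM, hj, h1, h2]
    have hzero : ∀ i ∈ Finset.univ, i ∉ ({j, j'} : Finset (Fin (n + 1))) →
        auxM α n j i * s k ^ (n - (i : ℕ)) = 0 := by
      intro i _ hi
      simp only [Finset.mem_insert, Finset.mem_singleton, not_or] at hi
      have h1 : i ≠ j := hi.1
      have h2 : (i : ℕ) ≠ (j : ℕ) + 1 := by
        intro h
        exact hi.2 (Fin.ext (by simpa using h))
      simp [auxM, hj, h1, h2]
    rw [← Finset.sum_subset (Finset.subset_univ _) hzero, Finset.sum_pair hne, e1, e2]
    have h3 : n - ((j' : ℕ)) = n - 1 - (j : ℕ) := by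
      have : ((j' : ℕ)) = (j : ℕ) + 1 := rfl
      omega
    rw [h3]
    simp only [tildeCMat, Matrix.of_apply, if_pos hj]
    ring
  · rw [Finset.sum_eq_single j]
    · have h0 : n - (j : ℕ) = 0 := by omega
      simp [tildeCMat, auxM, hj, h0]
    · intro i _ hij
      simp [auxM, if_neg hj, hij]
    · simp

/-- Row reduction transforms `J = C̃` into the Vandermonde-type matrix with entries
`s_k^{n-j}` in row `j` (last row all ones): the determinant of `J` is a nonzero
multiple (depending only on `α` and `n`) of the Vandermonde determinant; hence
`det J ≠ 0` iff the `s_k` are pairwise distinct. -/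
theorem tildeCMat_det_vandermonde (α : ℝ) (hα : 0 < α) (n : ℕ)
    (s : Fin (n + 1) → ℝ) :
    ∃ κ : ℝ, κ ≠ 0 ∧
      (tildeCMat α n s).det =
        κ * (Matrix.of fun j k : Fin (n + 1) => s k ^ (n - (j : ℕ))).det ∧
      ((tildeCMat α n s).det ≠ 0 ↔ Function.Injective s) := by
  set V : Matrix (Fin (n + 1)) (Fin (n + 1)) ℝ :=
    Matrix.of fun j k : Fin (n + 1) => s k ^ (n - (j : ℕ)) with hV
  have hκ : (auxM α n).det ≠ 0 := by
    rw [Matrix.det_of_upperTriangular (auxM_upper α n)]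
    exact Finset.prod_ne_zero_iff.2 fun j _ => auxM_diag_ne α hα n j
  have hdet : (tildeCMat α n s).det = (auxM α n).det * V.det := by
    rw [tildeC_factorization α n s, Matrix.det_mul]
  -- relate V.det to Vandermonde
  have hVvan : V = Matrix.transpose ((Matrix.vandermonde s).submatrix id Fin.rev) := by
    ext j k
    show s k ^ (n - (j : ℕ)) = s k ^ ((Fin.rev j : Fin (n + 1)) : ℕ)
    congr 1
    rw [Fin.val_rev]
    omega
  have hVval : V.det = ((Equiv.Perm.sign (Fin.revPerm : Equiv.Perm (Fin (n + 1)))) : ℤ) *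
      (Matrix.vandermonde s).det := by
    rw [hVvan, Matrix.det_transpose]
    exact Matrix.det_permute' (Fin.revPerm : Equiv.Perm (Fin (n + 1))) _
  have hsign : (((Equiv.Perm.sign (Fin.revPerm : Equiv.Perm (Fin (n + 1)))) : ℤ) : ℝ) ≠ 0 := by
    rcases Int.units_eq_one_or (Equiv.Perm.sign (Fin.revPerm : Equiv.Perm (Fin (n + 1)))) with h | h <;>
      simp [h]
  have hVne : V.det ≠ 0 ↔ Function.Injective s := by
    rw [hVval, mul_ne_zero_iff]
    constructor
    · intro h; exact (Matrix.det_vandermonde_ne_zero_iff).1 h.2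
    · intro h; exact ⟨hsign, (Matrix.det_vandermonde_ne_zero_iff).2 h⟩
  refine ⟨(auxM α n).det, hκ, hdet, ?_⟩
  rw [hdet, mul_ne_zero_iff]
  constructor
  · intro h; exact hVne.1 h.2
  · intro h; exact ⟨hκ, hVne.2 h⟩
end

section
/- For the Lyapunov function V(x) = 1 + Σ_{i=1}^L Σ_{k=0}^{n_i} (b(k+1)/α_i^k)|x^{(i,k)}| with b strictly increasing, the drift part A(x) = Σ_i ( Σ_{k=0}^{n_i−1} (b(k+1)/α_i^k)(x^{(i,k+1)} − α_i x^{(i,k)}) sgn(x^{(i,k)}) − (b(n_i+1)/α_i^{n_i−1})|x^{(i,n_i)}| ) satisfies A(x) ≤ −α b(1) Σ_i |x^{(i,0)}| − r Σ_i Σ_{k=1}^{n_i} (b(k+1)/α_i^k)|x^{(i,k)}|, where α = min_i α_i, b_* = min_{0≤k≤n}(b(k+1)−b(k)), n = max_i n_i and r = α b_*/b(n+1). -/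
lemma sign_self_mul (y : ℝ) : y * Real.sign y = |y| := by
  rcases lt_trichotomy y 0 with h | h | h
  · rw [Real.sign_of_neg h, abs_of_neg h]; ring
  · simp [h]
  · rw [Real.sign_of_pos h, abs_of_pos h]; ring

lemma mul_sign_le (z y : ℝ) : z * Real.sign y ≤ |z| := by
  rcases lt_trichotomy y 0 with h | h | h
  · rw [Real.sign_of_neg h]; calc z * (-1) = -z := by ring
      _ ≤ |z| := neg_le_abs z
  · simp [h, abs_nonneg]
  · rw [Real.sign_of_pos h, mul_one]; exact le_abs_self z

lemma key_telescope (α : ℝ) (hα : 0 < α) (b : ℕ → ℝ) (x : ℕ → ℝ) :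
    ∀ m : ℕ, (∀ k, 1 ≤ k → k ≤ m → 0 ≤ b k) →
    (∑ k ∈ Finset.range m,
        b (k + 1) / α ^ k * (x (k + 1) - α * x k) * Real.sign (x k))
      - α * b (m + 1) / α ^ m * |x m| ≤
    -(α * b 1) * |x 0| - ∑ k ∈ Finset.Icc 1 m, α * (b (k + 1) - b k) / α ^ k * |x k| := by
  intro m
  induction m with
  | zero => intro _; simp
  | succ m ih =>
    intro hb
    have hbm : 0 ≤ b (m + 1) := hb (m + 1) (Nat.le_add_left 1 m) le_rfl
    have ihm := ih (fun k hk1 hk2 => hb k hk1 (hk2.trans (Nat.le_succ m)))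
    have hαm : (0:ℝ) < α ^ m := pow_pos hα m
    have hnew : b (m + 1) / α ^ m * (x (m + 1) - α * x m) * Real.sign (x m) ≤
        b (m + 1) / α ^ m * (|x (m + 1)| - α * |x m|) := by
      have hc : (0:ℝ) ≤ b (m + 1) / α ^ m := div_nonneg hbm hαm.le
      have h1 : (x (m + 1) - α * x m) * Real.sign (x m) ≤ |x (m + 1)| - α * |x m| := by
        have := mul_sign_le (x (m + 1)) (x m)
        have h2 := sign_self_mul (x m)
        nlinarith [this, h2]
      calc b (m + 1) / α ^ m * (x (m + 1) - α * x m) * Real.sign (x m)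
          = b (m + 1) / α ^ m * ((x (m + 1) - α * x m) * Real.sign (x m)) := by ring
        _ ≤ b (m + 1) / α ^ m * (|x (m + 1)| - α * |x m|) := by
            exact mul_le_mul_of_nonneg_left h1 hc
    rw [Finset.sum_range_succ]
    have hicc : ∑ k ∈ Finset.Icc 1 (m + 1), α * (b (k + 1) - b k) / α ^ k * |x k|
        = (∑ k ∈ Finset.Icc 1 m, α * (b (k + 1) - b k) / α ^ k * |x k|)
          + α * (b (m + 2) - b (m + 1)) / α ^ (m + 1) * |x (m + 1)| := by
      rw [← Finset.sum_Icc_succ_top (Nat.le_add_left 1 m)]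
    rw [hicc]
    have hpowsucc : α ^ (m + 1) = α ^ m * α := pow_succ α m
    have hαne : α ≠ 0 := hα.ne'
    have hpne : (α:ℝ) ^ m ≠ 0 := hαm.ne'
    -- arithmetic identity to combine terms
    have hid : b (m + 1) / α ^ m * (|x (m + 1)| - α * |x m|)
        + α * b (m + 1) / α ^ m * |x m|
        - α * b (m + 2) / α ^ (m + 1) * |x (m + 1)|
        = - (α * (b (m + 2) - b (m + 1)) / α ^ (m + 1) * |x (m + 1)|) := by
      field_simp
      ring
    linarith [ihm, hnew, hid]

/-- The drift part of `𝓛V` for the Lyapunov function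
`V(x) = 1 + Σ_i Σ_k (b(k+1)/α_i^k)|x^{(i,k)}|` satisfies
`A(x) ≤ −α b(1) Σ_i |x^{(i,0)}| − r Σ_i Σ_{k=1}^{n_i} (b(k+1)/α_i^k)|x^{(i,k)}|`,
where `α = min_i α_i`, `n = max_i n_i`, `b_* = min_{0≤k≤n}(b(k+1)−b(k))` and
`r = α b_*/b(n+1)`. -/
theorem cascade_drift_part_bound
    {L : ℕ} (hL : 0 < L) (n : Fin L → ℕ) (α : Fin L → ℝ) (hα : ∀ i, 0 < α i)
    (nmax : ℕ) (hnmax : ∀ i, n i ≤ nmax) (hnmem : ∃ i, n i = nmax)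
    (b : ℕ → ℝ) (hbpos : ∀ k ≤ nmax + 1, 0 < b k)
    (hbmono : ∀ k ≤ nmax, b k < b (k + 1))
    (αmin : ℝ) (hαmin : ∀ i, αmin ≤ α i) (hαmem : ∃ i, α i = αmin)
    (bstar : ℝ) (hbstar : ∀ k ≤ nmax, bstar ≤ b (k + 1) - b k)
    (hbstarmem : ∃ k ≤ nmax, b (k + 1) - b k = bstar)
    (r : ℝ) (hr : r = αmin * bstar / b (nmax + 1))
    (x : Fin L → ℕ → ℝ) :
    (∑ i, ((∑ k ∈ Finset.range (n i),
        b (k + 1) / (α i) ^ k * (x i (k + 1) - α i * x i k) * Real.sign (x i k))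
      - α i * b (n i + 1) / (α i) ^ (n i) * |x i (n i)|)) ≤
    -(αmin * b 1) * (∑ i, |x i 0|)
      - r * ∑ i, ∑ k ∈ Finset.Icc 1 (n i), b (k + 1) / (α i) ^ k * |x i k| := by
  obtain ⟨i0, hi0⟩ := hαmem
  have hαminpos : 0 < αmin := hi0 ▸ hα i0
  obtain ⟨k0, hk0le, hk0⟩ := hbstarmem
  have hbstarpos : 0 < bstar := hk0 ▸ sub_pos.mpr (hbmono k0 hk0le)
  have hbtop : 0 < b (nmax + 1) := hbpos (nmax + 1) le_rfl
  have hrpos : 0 < r := hr ▸ div_pos (mul_pos hαminpos hbstarpos) hbtop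
  have hb1 : 0 < b 1 := hbpos 1 (by omega)
  -- b is monotone on [0, nmax+1]
  have hbmono' : ∀ j k, j ≤ k → k ≤ nmax + 1 → b j ≤ b k := by
    intro j k hjk hk
    induction k with
    | zero =>
      have : j = 0 := by omega
      rw [this]
    | succ k ih =>
      rcases Nat.lt_or_ge j (k + 1) with h | h
      · exact (ih (by omega) (by omega)).trans (hbmono k (by omega)).le
      · have : j = k + 1 := by omega
        rw [this]
  have hrw : -(αmin * b 1) * (∑ i, |x i 0|)
      - r * ∑ i, ∑ k ∈ Finset.Icc 1 (n i), b (k + 1) / (α i) ^ k * |x i k|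
      = ∑ i, (-(αmin * b 1) * |x i 0|
        - r * ∑ k ∈ Finset.Icc 1 (n i), b (k + 1) / (α i) ^ k * |x i k|) := by
    rw [Finset.mul_sum, Finset.mul_sum, ← Finset.sum_sub_distrib]
  rw [hrw]
  apply Finset.sum_le_sum
  intro i _
  have hαi := hα i
  have hkey := key_telescope (α i) hαi b (x i) (n i)
    (fun k hk1 hk2 => (hbpos k (by have := hnmax i; omega)).le)
  refine hkey.trans ?_
  have h1 : -(α i * b 1) * |x i 0| ≤ -(αmin * b 1) * |x i 0| := by
    have : αmin * b 1 ≤ α i * b 1 := mul_le_mul_of_nonneg_right (hαmin i) hb1.le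
    nlinarith [abs_nonneg (x i 0)]
  have h2 : r * ∑ k ∈ Finset.Icc 1 (n i), b (k + 1) / (α i) ^ k * |x i k|
      ≤ ∑ k ∈ Finset.Icc 1 (n i), α i * (b (k + 1) - b k) / (α i) ^ k * |x i k| := by
    rw [Finset.mul_sum]
    apply Finset.sum_le_sum
    intro k hk
    simp only [Finset.mem_Icc] at hk
    have hknmax : k ≤ nmax := (hk.2).trans (hnmax i)
    have hcoef : r * b (k + 1) ≤ α i * (b (k + 1) - b k) := by
      have h3 : r * b (k + 1) ≤ r * b (nmax + 1) := by
        apply mul_le_mul_of_nonneg_left _ hrpos.le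
        exact hbmono' (k + 1) (nmax + 1) (by omega) le_rfl
      have h4 : r * b (nmax + 1) = αmin * bstar := by
        rw [hr]; field_simp
      have h5 : αmin * bstar ≤ α i * (b (k + 1) - b k) := by
        have := hbstar k hknmax
        have := hαmin i
        nlinarith
      linarith
    have hpos : 0 ≤ |x i k| / (α i) ^ k :=
      div_nonneg (abs_nonneg _) (pow_pos hαi k).le
    calc r * (b (k + 1) / α i ^ k * |x i k|)
        = (r * b (k + 1)) * (|x i k| / (α i) ^ k) := by ring
      _ ≤ (α i * (b (k + 1) - b k)) * (|x i k| / (α i) ^ k) :=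
          mul_le_mul_of_nonneg_right hcoef hpos
      _ = α i * (b (k + 1) - b k) / (α i) ^ k * |x i k| := by ring
  linarith
end
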